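/- Under the conditions Σ_i k_i = 0, Σ_j b_j = 1, and Σ_i k_i c_i ≠ 0 (with c_i = Σ_j a_{ij}), if every stage derivative satisfies f_j = f_0 + O(Δt) as Δt → 0, then B*(Δt) = −2(Σ_i k_i c_i)||f_0||² + O(Δt); in particular, if f_0 ≠ 0, then B*(Δt) is bounded away from zero for sufficiently small Δt. -/

import Mathlib

open RealInnerProductSpace Asymptotics Filter Topology

/-- Taylor behaviour of B*: B*(Δt) = −2(Σ kᵢcᵢ)‖f₀‖² + O(Δt); hence B* is bounded
away from zero for small Δt whenever f₀ ≠ 0. -/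
theorem bstar_asymptotics {E : Type*} [NormedAddCommGroup E] [InnerProductSpace ℝ E]
    (s : ℕ) (A : Fin s → Fin s → ℝ) (b k c : Fin s → ℝ)
    (hc : ∀ i, c i = ∑ j, A i j)
    (hk0 : ∑ i, k i = 0) (hb1 : ∑ j, b j = 1) (hkc : ∑ i, k i * c i ≠ 0)
    (f : ℝ → Fin s → E) (f0 : E)
    (hf : ∀ j, (fun Δt => f Δt j - f0) =O[𝓝[>] (0 : ℝ)] fun Δt => Δt)
    (Bstar : ℝ → ℝ)
    (hB : ∀ Δt, Bstar Δt =
        -2 * ∑ i, ∑ j, k i * A i j * ⟪f Δt i, f Δt j⟫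
          + 2 * ∑ i, ∑ j, k i * b j * ⟪f Δt i, f Δt j⟫) :
    (fun Δt => Bstar Δt - (-2 * (∑ i, k i * c i) * ‖f0‖ ^ 2))
        =O[𝓝[>] (0 : ℝ)] (fun Δt => Δt) ∧
      (f0 ≠ 0 → ∃ δ > 0, ∃ C > 0, ∀ Δt ∈ Set.Ioo (0 : ℝ) δ, C ≤ |Bstar Δt|) := by
  set l : Filter ℝ := 𝓝[>] (0 : ℝ)
  -- Δt is O(1) on l
  have hΔ1 : (fun Δt : ℝ => Δt) =O[l] (fun _ => (1 : ℝ)) := by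
    exact (tendsto_id.mono_left nhdsWithin_le_nhds).isBigO_one ℝ
  -- each f · j is O(1)
  have hfb : ∀ j, (fun Δt => f Δt j) =O[l] (fun _ => (1 : ℝ)) := by
    intro j
    have : (fun Δt => (f Δt j - f0) + f0) =O[l] (fun _ => (1 : ℝ)) :=
      ((hf j).trans hΔ1).add (isBigO_const_const f0 one_ne_zero l)
    simpa using this
  -- inner product differences are O(Δt)
  have hinner : ∀ i j, (fun Δt => (⟪f Δt i, f Δt j⟫ : ℝ) - ⟪f0, f0⟫) =O[l] (fun Δt => Δt) := by
    intro i j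
    have key : ∀ Δt, (⟪f Δt i, f Δt j⟫ : ℝ) - ⟪f0, f0⟫ =
        ⟪f Δt i - f0, f Δt j⟫ + ⟪f0, f Δt j - f0⟫ := by
      intro Δt
      simp [inner_sub_left, inner_sub_right]
    have h1 : (fun Δt => (⟪f Δt i - f0, f Δt j⟫ : ℝ)) =O[l] (fun Δt => Δt) := by
      calc (fun Δt => (⟪f Δt i - f0, f Δt j⟫ : ℝ))
          =O[l] (fun Δt => ‖f Δt i - f0‖ * ‖f Δt j‖) := by
            apply IsBigO.of_bound 1
            filter_upwards with Δt
            simpa using norm_inner_le_norm (𝕜 := ℝ) (f Δt i - f0) (f Δt j)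
        _ =O[l] (fun Δt => Δt * 1) := ((hf i).norm_left.mul (hfb j).norm_left)
        _ = (fun Δt => Δt) := by funext; ring
    have h2 : (fun Δt => (⟪f0, f Δt j - f0⟫ : ℝ)) =O[l] (fun Δt => Δt) := by
      calc (fun Δt => (⟪f0, f Δt j - f0⟫ : ℝ))
          =O[l] (fun Δt => ‖f0‖ * ‖f Δt j - f0‖) := by
            apply IsBigO.of_bound 1
            filter_upwards with Δt
            simpa using norm_inner_le_norm (𝕜 := ℝ) f0 (f Δt j - f0)
        _ =O[l] (fun Δt => 1 * Δt) :=
            ((isBigO_const_const f0 one_ne_zero l).norm_left.mul (hf j).norm_left)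
        _ = (fun Δt => Δt) := by funext; ring
    simpa only [key] using h1.add h2
  -- algebraic identity
  have hnorm : (⟪f0, f0⟫ : ℝ) = ‖f0‖ ^ 2 := real_inner_self_eq_norm_sq f0
  have key : ∀ Δt, Bstar Δt - (-2 * (∑ i, k i * c i) * ‖f0‖ ^ 2) =
      ∑ i, ∑ j, (-2 * (k i * A i j) + 2 * (k i * b j)) *
        ((⟪f Δt i, f Δt j⟫ : ℝ) - ⟪f0, f0⟫) := by
    intro Δt
    have e1 : ∑ i, ∑ j, k i * A i j * (⟪f0, f0⟫ : ℝ) = (∑ i, k i * c i) * ‖f0‖ ^ 2 := by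
      rw [Finset.sum_mul]
      refine Finset.sum_congr rfl fun i _ => ?_
      rw [hc i, ← Finset.sum_mul, ← Finset.mul_sum, hnorm, mul_assoc]
    have e2 : ∑ i, ∑ j, k i * b j * (⟪f0, f0⟫ : ℝ) = 0 := by
      have : ∀ i, ∑ j, k i * b j * (⟪f0, f0⟫ : ℝ) = k i * ⟪f0, f0⟫ := by
        intro i
        rw [← Finset.sum_mul, ← Finset.mul_sum, hb1, mul_one]
      simp only [this, ← Finset.sum_mul, hk0, zero_mul]
    simp only [add_mul, mul_sub, Finset.sum_add_distrib, Finset.sum_sub_distrib]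
    rw [hB Δt]
    rw [show (∑ i, ∑ j, -2 * (k i * A i j) * (⟪f Δt i, f Δt j⟫ : ℝ)) =
        -2 * ∑ i, ∑ j, k i * A i j * ⟪f Δt i, f Δt j⟫ by
      rw [Finset.mul_sum]; exact Finset.sum_congr rfl fun i _ => by
        rw [Finset.mul_sum]; exact Finset.sum_congr rfl fun j _ => by ring]
    rw [show (∑ i, ∑ j, 2 * (k i * b j) * (⟪f Δt i, f Δt j⟫ : ℝ)) =
        2 * ∑ i, ∑ j, k i * b j * ⟪f Δt i, f Δt j⟫ by
      rw [Finset.mul_sum]; exact Finset.sum_congr rfl fun i _ => by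
        rw [Finset.mul_sum]; exact Finset.sum_congr rfl fun j _ => by ring]
    rw [show (∑ i, ∑ j, -2 * (k i * A i j) * (⟪f0, f0⟫ : ℝ)) =
        -2 * ∑ i, ∑ j, k i * A i j * ⟪f0, f0⟫ by
      rw [Finset.mul_sum]; exact Finset.sum_congr rfl fun i _ => by
        rw [Finset.mul_sum]; exact Finset.sum_congr rfl fun j _ => by ring]
    rw [show (∑ i, ∑ j, 2 * (k i * b j) * (⟪f0, f0⟫ : ℝ)) =
        2 * ∑ i, ∑ j, k i * b j * ⟪f0, f0⟫ by
      rw [Finset.mul_sum]; exact Finset.sum_congr rfl fun i _ => by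
        rw [Finset.mul_sum]; exact Finset.sum_congr rfl fun j _ => by ring]
    rw [e1, e2]
    ring
  have part1 : (fun Δt => Bstar Δt - (-2 * (∑ i, k i * c i) * ‖f0‖ ^ 2))
      =O[l] (fun Δt => Δt) := by
    have : (fun Δt => ∑ i, ∑ j, (-2 * (k i * A i j) + 2 * (k i * b j)) *
        ((⟪f Δt i, f Δt j⟫ : ℝ) - ⟪f0, f0⟫)) =O[l] (fun Δt => Δt) := by
      apply IsBigO.fun_sum
      intro i _
      apply IsBigO.fun_sum
      intro j _
      exact (hinner i j).const_mul_left _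
    simpa only [← key] using this
  refine ⟨part1, fun hf0 => ?_⟩
  set L : ℝ := -2 * (∑ i, k i * c i) * ‖f0‖ ^ 2 with hL
  have hLne : L ≠ 0 :=
    mul_ne_zero (mul_ne_zero (by norm_num) hkc) (pow_ne_zero _ (norm_ne_zero_iff.mpr hf0))
  have hLpos : 0 < |L| := abs_pos.mpr hLne
  obtain ⟨C, hC⟩ := part1.bound
  rw [eventually_iff, mem_nhdsGT_iff_exists_Ioo_subset] at hC
  obtain ⟨u, hu, hsub⟩ := hC
  have hupos : (0:ℝ) < u := hu
  have hCpos : (0:ℝ) < |C| + 1 := by positivity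
  refine ⟨min u (|L| / (2 * (|C| + 1))), lt_min hupos (by positivity), |L| / 2, by positivity, ?_⟩
  intro Δt hΔt
  obtain ⟨h1, h2⟩ := hΔt
  have hmem : Δt ∈ Set.Ioo (0:ℝ) u := ⟨h1, lt_of_lt_of_le h2 (min_le_left _ _)⟩
  have hbd : ‖Bstar Δt - L‖ ≤ C * ‖Δt‖ := hsub hmem
  have hb2 : |Bstar Δt - L| ≤ (|C| + 1) * Δt := by
    rw [Real.norm_eq_abs, Real.norm_eq_abs, abs_of_pos h1] at hbd
    nlinarith [le_abs_self C]
  have hΔsmall : Δt < |L| / (2 * (|C| + 1)) := lt_of_lt_of_le h2 (min_le_right _ _)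
  have hsmall : |Bstar Δt - L| < |L| / 2 := by
    calc |Bstar Δt - L| ≤ (|C| + 1) * Δt := hb2
      _ < (|C| + 1) * (|L| / (2 * (|C| + 1))) := mul_lt_mul_of_pos_left hΔsmall hCpos
      _ = |L| / 2 := by field_simp
  have habs : |L| - |Bstar Δt - L| ≤ |Bstar Δt| := by
    have h := abs_sub_abs_le_abs_sub L (L - Bstar Δt)
    simp only [sub_sub_cancel] at h
    rw [abs_sub_comm] at h
    linarith
  linarith
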